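/- arXiv:1507.02275 — 3 statements merged into one kernel-verified Lean document; each statement's English description precedes it below -/
import Mathlib

section
/- Let E be a C*-algebra, H a selfdual Hilbert right E-module, and K a Hilbert right E-submodule of H which is itself selfdual. Then there exists a projection p ∈ Pr L_E(H) with K = p(H). -/
open scoped Topology

/-- The data of a Hilbert right `E`-module structure on a Banach space `H`,
where `E` is a C*-algebra over `𝕜 = ℝ` or `ℂ`: a right module action `smul : H → E → H`
and an `E`-valued inner product `inner : H → H → E`, `E`-linear in the first variable. -/
structure HilbertModuleData (𝕜 E H : Type*) [RCLike 𝕜]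
    [NormedRing E] [StarRing E] [CStarRing E] [NormedAlgebra 𝕜 E] [StarModule 𝕜 E]
    [CompleteSpace E] [PartialOrder E] [StarOrderedRing E]
    [NormedAddCommGroup H] [NormedSpace 𝕜 H] [CompleteSpace H] : Type _ where
  smul : H → E → H
  inner : H → H → E
  add_smul' : ∀ ξ η x, smul (ξ + η) x = smul ξ x + smul η x
  smul_add' : ∀ ξ x y, smul ξ (x + y) = smul ξ x + smul ξ y
  smul_mul' : ∀ ξ x y, smul ξ (x * y) = smul (smul ξ x) y
  smul_one' : ∀ ξ, smul ξ 1 = ξ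
  smul_scalar' : ∀ (c : 𝕜) ξ x, smul (c • ξ) x = c • smul ξ x
  inner_add_left' : ∀ ξ η ζ, inner (ξ + η) ζ = inner ξ ζ + inner η ζ
  inner_smul_left' : ∀ (c : 𝕜) ξ η, inner (c • ξ) η = c • inner ξ η
  inner_smul_module' : ∀ ξ x η, inner (smul ξ x) η = inner ξ η * x
  star_inner' : ∀ ξ η, star (inner ξ η) = inner η ξ
  inner_self_nonneg' : ∀ ξ, 0 ≤ inner ξ ξ
  norm_eq' : ∀ ξ, ‖ξ‖ ^ 2 = ‖inner ξ ξ‖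
  inner_continuous' : ∀ η, Continuous fun ξ => inner ξ η

namespace HilbertModuleData

variable {𝕜 E H : Type*} [RCLike 𝕜]
    [NormedRing E] [StarRing E] [CStarRing E] [NormedAlgebra 𝕜 E] [StarModule 𝕜 E]
    [CompleteSpace E] [PartialOrder E] [StarOrderedRing E]
    [NormedAddCommGroup H] [NormedSpace 𝕜 H] [CompleteSpace H]
    (M : HilbertModuleData 𝕜 E H)

lemma inner_add_right (ξ η ζ : H) :
    M.inner ξ (η + ζ) = M.inner ξ η + M.inner ξ ζ := by
  have h := congrArg star (M.inner_add_left' η ζ ξ)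
  simpa [M.star_inner', star_add] using h

lemma inner_smul_right (c : 𝕜) (ξ η : H) :
    M.inner ξ (c • η) = star c • M.inner ξ η := by
  have h := congrArg star (M.inner_smul_left' c η ξ)
  simpa [M.star_inner', star_smul] using h

/-- A bounded `E`-linear map (module morphism) from `H` to `E`. -/
def IsModuleMap (u : H →L[𝕜] E) : Prop := ∀ ξ x, u (M.smul ξ x) = u ξ * x

/-- `H` is selfdual: every bounded `E`-linear map `H → E` is `⟨·, η⟩` for some `η ∈ H`. -/
def Selfdual : Prop :=
  ∀ u : H →L[𝕜] E, M.IsModuleMap u → ∃ η, ∀ ζ, u ζ = M.inner ζ η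

/-- A Hilbert right `E`-submodule of `H`: a (norm-)closed subspace stable under the
module action. -/
def IsHilbertSubmodule (K : Submodule 𝕜 H) : Prop :=
  (∀ ξ ∈ K, ∀ x : E, M.smul ξ x ∈ K) ∧ IsClosed (K : Set H)

/-- Selfduality of a Hilbert right `E`-submodule `K` of `H`: every bounded `E`-linear
map `K → E` is `⟨·, η⟩` for some `η ∈ K`. -/
def SelfdualSub (K : Submodule 𝕜 H) : Prop :=
  ∀ u : K →L[𝕜] E,
    (∀ (ξ : K) (x : E) (h : M.smul (ξ : H) x ∈ K), u ⟨M.smul (ξ : H) x, h⟩ = u ξ * x) →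
    ∃ η ∈ K, ∀ ζ : K, u ζ = M.inner (ζ : H) η

/-- An adjointable operator on `H`: an element of `L_E(H)`. -/
structure Adjointable : Type _ where
  toFun : H →L[𝕜] H
  adj : H →L[𝕜] H
  inner_adj : ∀ ξ η, M.inner (toFun ξ) η = M.inner ξ (adj η)

variable {M}

/-- The identity operator in `L_E(H)`. -/
def idA : M.Adjointable := ⟨ContinuousLinearMap.id 𝕜 H, ContinuousLinearMap.id 𝕜 H, fun _ _ => rfl⟩

/-- Product in `L_E(H)`. -/
def mulA (u v : M.Adjointable) : M.Adjointable where
  toFun := u.toFun ∘L v.toFun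
  adj := v.adj ∘L u.adj
  inner_adj := by
    intro ξ η
    simp only [ContinuousLinearMap.comp_apply]
    rw [u.inner_adj, v.inner_adj]

/-- Sum in `L_E(H)`. -/
def addA (u v : M.Adjointable) : M.Adjointable where
  toFun := u.toFun + v.toFun
  adj := u.adj + v.adj
  inner_adj := by
    intro ξ η
    simp only [ContinuousLinearMap.add_apply]
    rw [M.inner_add_left', u.inner_adj, v.inner_adj, ← M.inner_add_right]

/-- Scalar multiple in `L_E(H)`. -/
def smulA (c : 𝕜) (u : M.Adjointable) : M.Adjointable where
  toFun := c • u.toFun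
  adj := star c • u.adj
  inner_adj := by
    intro ξ η
    simp only [ContinuousLinearMap.smul_apply]
    rw [M.inner_smul_left', u.inner_adj, M.inner_smul_right, star_star]

/-- Adjoint (involution) in `L_E(H)`. -/
def starA (u : M.Adjointable) : M.Adjointable where
  toFun := u.adj
  adj := u.toFun
  inner_adj := by
    intro ξ η
    have h := congrArg star (u.inner_adj η ξ)
    simpa [M.star_inner'] using h.symm

variable (M)

/-- The commutant of a subset of `L_E(H)`. -/
def commutant (F : Set M.Adjointable) : Set M.Adjointable :=
  {w | ∀ v ∈ F, w.toFun ∘L v.toFun = v.toFun ∘L w.toFun}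

/-- `F` is an involutive subalgebra of `L_E(H)`. -/
def IsInvolutiveSubalgebra (F : Set M.Adjointable) : Prop :=
  (∀ u ∈ F, ∀ v ∈ F, addA u v ∈ F) ∧ (∀ u ∈ F, ∀ v ∈ F, mulA u v ∈ F) ∧
    (∀ (c : 𝕜), ∀ u ∈ F, smulA c u ∈ F) ∧ (∀ u ∈ F, starA u ∈ F)

/-- `p ∈ Pr L_E(H)`: a self-adjoint idempotent adjointable operator. -/
def IsProjection (p : M.Adjointable) : Prop :=
  p.toFun ∘L p.toFun = p.toFun ∧ p.adj = p.toFun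

variable {P : Type*} [NormedAddCommGroup P] [NormedSpace 𝕜 P]

/-- The weak topology `σ(H, Ḣ)` on `H`: the topology of pointwise convergence on the
functionals `ζ ↦ ⟨⟨ζ, ξ⟩, a⟩`, `a` in the predual of `E`, `ξ ∈ H`.
The predual of `E` is presented by a Banach space `P` together with an isometric
isomorphism `eE : E ≃ P'`. -/
noncomputable def weakTopology (eE : E ≃ₗᵢ[𝕜] StrongDual 𝕜 P) : TopologicalSpace H :=
  ⨅ p : P × H,
    TopologicalSpace.induced (fun ζ : H => eE (M.inner ζ p.2) p.1) inferInstance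

/-- The weak topology `σ(L_E(H), L̈(H))` on `L_E(H)`: the topology of pointwise
convergence on the functionals `u ↦ ⟨⟨u ξ, η⟩, a⟩`. -/
noncomputable def opWeakTopology (eE : E ≃ₗᵢ[𝕜] StrongDual 𝕜 P) : TopologicalSpace M.Adjointable :=
  ⨅ p : P × H × H,
    TopologicalSpace.induced
      (fun w : M.Adjointable => eE (M.inner (w.toFun p.2.1) p.2.2) p.1) inferInstance

end HilbertModuleData

open HilbertModuleData

namespace HilbertModuleData

section Aux

variable {𝕜 E H : Type*} [RCLike 𝕜]
    [NormedRing E] [StarRing E] [CStarRing E] [NormedAlgebra 𝕜 E] [StarModule 𝕜 E]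
    [CompleteSpace E] [PartialOrder E] [StarOrderedRing E]
    [NormedAddCommGroup H] [NormedSpace 𝕜 H] [CompleteSpace H]
    (M : HilbertModuleData 𝕜 E H)

lemma aux_inner_zero_left (η : H) : M.inner 0 η = 0 := by
  simpa using M.inner_smul_left' (0 : 𝕜) 0 η

lemma aux_inner_neg_left (ξ η : H) : M.inner (-ξ) η = -M.inner ξ η := by
  simpa using M.inner_smul_left' (-1 : 𝕜) ξ η

lemma aux_inner_sub_left (ξ ξ' η : H) :
    M.inner (ξ - ξ') η = M.inner ξ η - M.inner ξ' η := by
  rw [sub_eq_add_neg, M.inner_add_left', M.aux_inner_neg_left, sub_eq_add_neg]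

lemma aux_inner_sub_right (ξ η η' : H) :
    M.inner ξ (η - η') = M.inner ξ η - M.inner ξ η' := by
  have h := congrArg star (M.aux_inner_sub_left η η' ξ)
  simpa [M.star_inner', star_sub] using h

lemma aux_eq_zero_of_inner_self (ξ : H) (h : M.inner ξ ξ = 0) : ξ = 0 := by
  have hn := M.norm_eq' ξ
  rw [h, norm_zero] at hn
  have : ‖ξ‖ = 0 := by nlinarith [norm_nonneg ξ]
  exact norm_eq_zero.mp this

lemma aux_inner_continuous_right (ζ : H) : Continuous fun η : H => M.inner ζ η := by
  have h : (fun η : H => M.inner ζ η) = fun η => star (M.inner η ζ) :=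
    funext fun η => (M.star_inner' η ζ).symm
  rw [h]
  exact continuous_star.comp (M.inner_continuous' ζ)

end Aux

end HilbertModuleData

variable {𝕜 E H P : Type*} [RCLike 𝕜]
    [NormedRing E] [StarRing E] [CStarRing E] [NormedAlgebra 𝕜 E] [StarModule 𝕜 E]
    [CompleteSpace E] [PartialOrder E] [StarOrderedRing E]
    [NormedAddCommGroup H] [NormedSpace 𝕜 H] [CompleteSpace H]
    [NormedAddCommGroup P] [NormedSpace 𝕜 P]
/-- if `H` is selfdual and the Hilbert right `E`-submodule `K` is selfdual,
then `K = p(H)` for some projection `p ∈ Pr L_E(H)`. -/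
theorem exists_projection_of_selfdualSub
    (M : HilbertModuleData 𝕜 E H) (hH : M.Selfdual)
    (K : Submodule 𝕜 H) (hK : M.IsHilbertSubmodule K) (hKsd : M.SelfdualSub K) :
    ∃ p : M.Adjointable, M.IsProjection p ∧ (K : Set H) = Set.range p.toFun := by
  classical
  -- uniqueness of the representing element in K
  have uniq : ∀ η ∈ K, ∀ η' ∈ K, (∀ ζ ∈ K, M.inner ζ η = M.inner ζ η') → η = η' := by
    intro η hη η' hη' hz
    have hd : η - η' ∈ K := K.sub_mem hη hη'
    have h0 : M.inner (η - η') (η - η') = 0 := by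
      rw [M.aux_inner_sub_right, hz _ hd, sub_self]
    have := M.aux_eq_zero_of_inner_self _ h0
    exact sub_eq_zero.mp this
  -- existence, via selfduality of K
  have exists_p : ∀ ξ : H, ∃ η, η ∈ K ∧ ∀ ζ ∈ K, M.inner ζ ξ = M.inner ζ η := by
    intro ξ
    let u : K →L[𝕜] E :=
      { toFun := fun ζ => M.inner (ζ : H) ξ
        map_add' := fun ζ ζ' => M.inner_add_left' _ _ _
        map_smul' := fun c ζ => by
          show M.inner ((c • ζ : K) : H) ξ = c • M.inner (ζ : H) ξ
          rw [Submodule.coe_smul]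
          exact M.inner_smul_left' c ζ ξ
        cont := (M.inner_continuous' ξ).comp continuous_subtype_val }
    obtain ⟨η, hηK, hη⟩ := hKsd u (fun ζ x h => M.inner_smul_module' (ζ : H) x ξ)
    exact ⟨η, hηK, fun ζ hζ => hη ⟨ζ, hζ⟩⟩
  set Pf : H → H := fun ξ => (exists_p ξ).choose with hPf
  have hPK : ∀ ξ, Pf ξ ∈ K := fun ξ => (exists_p ξ).choose_spec.1
  have hP : ∀ ξ, ∀ ζ ∈ K, M.inner ζ ξ = M.inner ζ (Pf ξ) :=
    fun ξ => (exists_p ξ).choose_spec.2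
  have hchar : ∀ ξ w, w ∈ K → (∀ ζ ∈ K, M.inner ζ ξ = M.inner ζ w) → Pf ξ = w :=
    fun ξ w hw h => uniq _ (hPK ξ) w hw (fun ζ hζ => (hP ξ ζ hζ).symm.trans (h ζ hζ))
  have hfix : ∀ η ∈ K, Pf η = η := fun η hη => hchar η η hη (fun ζ _ => rfl)
  -- linearity
  have hadd : ∀ ξ ξ', Pf (ξ + ξ') = Pf ξ + Pf ξ' := by
    intro ξ ξ'
    refine hchar _ _ (K.add_mem (hPK ξ) (hPK ξ')) (fun ζ hζ => ?_)
    rw [M.inner_add_right, M.inner_add_right, hP ξ ζ hζ, hP ξ' ζ hζ]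
  have hsmul : ∀ (c : 𝕜) ξ, Pf (c • ξ) = c • Pf ξ := by
    intro c ξ
    refine hchar _ _ (K.smul_mem c (hPK ξ)) (fun ζ hζ => ?_)
    rw [M.inner_smul_right, M.inner_smul_right, hP ξ ζ hζ]
  let Pl : H →ₗ[𝕜] H :=
    { toFun := Pf
      map_add' := hadd
      map_smul' := hsmul }
  -- continuity via the closed graph theorem
  have hgraph : IsClosed (Pl.graph : Set (H × H)) := by
    have hset : (Pl.graph : Set (H × H)) =
        {q : H × H | q.2 ∈ K} ∩
          ⋂ ζ ∈ (K : Set H), {q : H × H | M.inner ζ q.1 = M.inner ζ q.2} := by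
      ext q
      simp only [SetLike.mem_coe, LinearMap.mem_graph_iff, Set.mem_inter_iff, Set.mem_setOf_eq,
        Set.mem_iInter]
      constructor
      · intro hq
        refine ⟨hq ▸ hPK q.1, fun ζ hζ => ?_⟩
        rw [hq]
        exact hP q.1 ζ hζ
      · rintro ⟨h2, hI⟩
        exact (hchar q.1 q.2 h2 (fun ζ hζ => hI ζ hζ)).symm
    rw [hset]
    refine IsClosed.inter (hK.2.preimage continuous_snd) (isClosed_biInter fun ζ hζ => ?_)
    exact isClosed_eq ((M.aux_inner_continuous_right ζ).comp continuous_fst)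
      ((M.aux_inner_continuous_right ζ).comp continuous_snd)
  let Pc : H →L[𝕜] H := ContinuousLinearMap.ofIsClosedGraph hgraph
  have hPc : ∀ ξ, Pc ξ = Pf ξ := fun ξ => rfl
  -- the projection
  refine ⟨⟨Pc, Pc, fun ξ η => ?_⟩, ⟨?_, rfl⟩, ?_⟩
  · -- self-adjointness
    show M.inner (Pf ξ) η = M.inner ξ (Pf η)
    calc M.inner (Pf ξ) η = M.inner (Pf ξ) (Pf η) := hP η (Pf ξ) (hPK ξ)
      _ = star (M.inner (Pf η) (Pf ξ)) := (M.star_inner' _ _).symm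
      _ = star (M.inner (Pf η) ξ) := by rw [← hP ξ (Pf η) (hPK η)]
      _ = M.inner ξ (Pf η) := M.star_inner' _ _
  · -- idempotent
    ext ξ
    show Pf (Pf ξ) = Pf ξ
    exact hfix _ (hPK ξ)
  · -- range
    ext w
    constructor
    · intro hw
      exact ⟨w, hfix w hw⟩
    · rintro ⟨ξ, rfl⟩
      exact hPK ξ
end

section
/- Let E be a W*-algebra and H a selfdual Hilbert right E-module. If K is a Hilbert right E-submodule of H of the form K = p(H) for some projection p ∈ Pr L_E(H), then K is closed in H equipped with the weak topology σ(H, Ḣ) of pointwise convergence on the predual Ḣ of H. -/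
open scoped Topology

open HilbertModuleData

variable {𝕜 E H P : Type*} [RCLike 𝕜]
    [NormedRing E] [StarRing E] [CStarRing E] [NormedAlgebra 𝕜 E] [StarModule 𝕜 E]
    [CompleteSpace E] [PartialOrder E] [StarOrderedRing E]
    [NormedAddCommGroup H] [NormedSpace 𝕜 H] [CompleteSpace H]
    [NormedAddCommGroup P] [NormedSpace 𝕜 P]
/-- if `K = p(H)` for a projection `p ∈ Pr L_E(H)`, then `K` is closed in
the weak topology `σ(H, Ḣ)`. -/
theorem range_projection_weakly_closed
    (M : HilbertModuleData 𝕜 E H) (hH : M.Selfdual)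
    (eE : E ≃ₗᵢ[𝕜] StrongDual 𝕜 P)
    (K : Submodule 𝕜 H) (hK : M.IsHilbertSubmodule K)
    (p : M.Adjointable) (hp : M.IsProjection p)
    (hrange : (K : Set H) = Set.range p.toFun) :
    @IsClosed H (M.weakTopology eE) (K : Set H) := by
  have hfix : ∀ η : H, p.toFun (p.toFun η) = p.toFun η := fun η => by
    have := ContinuousLinearMap.ext_iff.mp hp.1 η
    simpa using this
  letI := M.weakTopology eE
  -- basic algebra lemmas
  have inner_neg_left : ∀ ξ η : H, M.inner (-ξ) η = -M.inner ξ η := by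
    intro ξ η
    have := M.inner_smul_left' (-1 : 𝕜) ξ η
    simpa using this
  have inner_sub_left : ∀ ξ η ζ : H, M.inner (ξ - η) ζ = M.inner ξ ζ - M.inner η ζ := by
    intro ξ η ζ
    rw [sub_eq_add_neg, M.inner_add_left', inner_neg_left, sub_eq_add_neg]
  -- the coordinate functionals are continuous for the weak topology
  have hcont : ∀ (a : P) (ζ : H), Continuous fun ξ : H => eE (M.inner ξ ζ) a := by
    intro a ζ
    exact continuous_iInf_dom (i := (a, ζ)) continuous_induced_dom
  -- K is the intersection of kernels of weakly continuous functionals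
  have hset : (K : Set H) =
      ⋂ ζ : H, ⋂ a : P, {ξ : H | eE (M.inner ξ (p.toFun ζ)) a = eE (M.inner ξ ζ) a} := by
    ext ξ
    simp only [Set.mem_iInter, Set.mem_setOf_eq]
    constructor
    · intro hξ ζ a
      rw [hrange] at hξ
      obtain ⟨η, rfl⟩ := hξ
      have h1 : M.inner (p.toFun η) (p.toFun ζ) = M.inner (p.toFun η) ζ := by
        calc M.inner (p.toFun η) (p.toFun ζ)
            = M.inner (p.toFun η) (p.adj ζ) := by rw [hp.2]
          _ = M.inner (p.toFun (p.toFun η)) ζ := (p.inner_adj _ ζ).symm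
          _ = M.inner (p.toFun η) ζ := by rw [hfix η]
      exact congrArg (fun x => eE x a) h1
    · intro hξ
      have hE : ∀ ζ : H, M.inner ξ (p.toFun ζ) = M.inner ξ ζ := by
        intro ζ
        apply eE.injective
        ext a
        exact hξ ζ a
      have hp' : ∀ ζ : H, M.inner (p.toFun ξ) ζ = M.inner ξ ζ := by
        intro ζ
        rw [p.inner_adj, hp.2, hE]
      have hzero : M.inner (p.toFun ξ - ξ) (p.toFun ξ - ξ) = 0 := by
        rw [inner_sub_left, hp' (p.toFun ξ - ξ), sub_self]
      have : ‖p.toFun ξ - ξ‖ ^ 2 = 0 := by rw [M.norm_eq', hzero, norm_zero]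
      have heq : p.toFun ξ = ξ := by
        have := pow_eq_zero_iff (n := 2) (by norm_num) |>.mp this
        exact sub_eq_zero.mp (norm_eq_zero.mp this)
      rw [hrange]
      exact ⟨ξ, heq⟩
  rw [hset]
  refine isClosed_iInter fun ζ => isClosed_iInter fun a => ?_
  exact isClosed_eq (hcont a (p.toFun ζ)) (hcont a ζ)
end

section
/- Let E be a W*-algebra, H a selfdual Hilbert right E-module, F an involutive unital subalgebra of L_E(H), and suppose F is dense in L_E(H) for the topology of pointwise convergence on the predual of L_E(H). Then F^{cc} = L_E(H), i.e., F^c consists exactly of the elements of the center of L_E(H) commuting with all of L_E(H). -/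
open scoped Topology

open HilbertModuleData

variable {𝕜 E H P : Type*} [RCLike 𝕜]
    [NormedRing E] [StarRing E] [CStarRing E] [NormedAlgebra 𝕜 E] [StarModule 𝕜 E]
    [CompleteSpace E] [PartialOrder E] [StarOrderedRing E]
    [NormedAddCommGroup H] [NormedSpace 𝕜 H] [CompleteSpace H]
    [NormedAddCommGroup P] [NormedSpace 𝕜 P]
/-- if the involutive unital subalgebra `F` is dense in `L_E(H)` for the
topology of pointwise convergence on the predual of `L_E(H)`, then `F^{cc} = L_E(H)`,
i.e. `F^c` consists exactly of the elements commuting with all of `L_E(H)`. -/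
theorem double_commutant_eq_univ_of_dense
    (M : HilbertModuleData 𝕜 E H) (hH : M.Selfdual)
    (eE : E ≃ₗᵢ[𝕜] StrongDual 𝕜 P)
    (F : Set M.Adjointable) (hF : M.IsInvolutiveSubalgebra F) (h1 : idA ∈ F)
    (hdense : @Dense _ (M.opWeakTopology eE) F) :
    M.commutant (M.commutant F) = Set.univ ∧
      M.commutant F = M.commutant (Set.univ : Set M.Adjointable) := by
  letI : TopologicalSpace M.Adjointable := M.opWeakTopology eE
  have hcont : ∀ (p : P) (ξ η : H),
      Continuous fun u : M.Adjointable => eE (M.inner (u.toFun ξ) η) p := fun p ξ η =>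
    continuous_iInf_dom (i := (p, ξ, η)) continuous_induced_dom
  have hsep : ∀ ζ : H, M.inner ζ ζ = 0 → ζ = 0 := by
    intro ζ h
    have hn := M.norm_eq' ζ
    rw [h, norm_zero] at hn
    have : ‖ζ‖ = 0 := by nlinarith [norm_nonneg ζ]
    simpa using this
  have hsub : ∀ a b η : H, M.inner (a - b) η = M.inner a η - M.inner b η := by
    intro a b η
    have h := M.inner_add_left' (a - b) b η
    rw [sub_add_cancel] at h
    exact eq_sub_of_add_eq h.symm
  have key : ∀ w ∈ M.commutant F, ∀ v : M.Adjointable,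
      w.toFun ∘L v.toFun = v.toFun ∘L w.toFun := by
    intro w hw v
    set S : Set M.Adjointable :=
      ⋂ (ξ : H) (η : H) (p : P),
        {u | eE (M.inner (u.toFun ξ) (w.adj η)) p
            = eE (M.inner (u.toFun (w.toFun ξ)) η) p} with hSdef
    have hSclosed : IsClosed S := by
      refine isClosed_iInter fun ξ => isClosed_iInter fun η => isClosed_iInter fun p => ?_
      exact isClosed_eq (hcont p ξ (w.adj η)) (hcont p (w.toFun ξ) η)
    have hFS : F ⊆ S := by
      intro u hu
      simp only [hSdef, Set.mem_iInter, Set.mem_setOf_eq]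
      intro ξ η p
      have hcomm := hw u hu
      have h1 : M.inner (u.toFun ξ) (w.adj η) = M.inner (w.toFun (u.toFun ξ)) η :=
        (w.inner_adj _ _).symm
      have h2 : w.toFun (u.toFun ξ) = u.toFun (w.toFun ξ) := by
        have := congrArg (fun f : H →L[𝕜] H => f ξ) hcomm
        simpa using this
      rw [h1, h2]
    have hvS : v ∈ S := by
      have hcl := closure_minimal hFS hSclosed
      rw [hdense.closure_eq] at hcl
      exact hcl (Set.mem_univ v)
    simp only [hSdef, Set.mem_iInter, Set.mem_setOf_eq] at hvS
    apply ContinuousLinearMap.ext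
    intro ξ
    have h3 : ∀ η, M.inner (w.toFun (v.toFun ξ)) η = M.inner (v.toFun (w.toFun ξ)) η := by
      intro η
      rw [w.inner_adj]
      exact eE.injective (ContinuousLinearMap.ext fun p => hvS ξ η p)
    have hζ : M.inner (w.toFun (v.toFun ξ) - v.toFun (w.toFun ξ))
        (w.toFun (v.toFun ξ) - v.toFun (w.toFun ξ)) = 0 := by
      rw [hsub, h3, sub_self]
    have := sub_eq_zero.mp (hsep _ hζ)
    simpa using this
  have h2 : M.commutant F = M.commutant (Set.univ : Set M.Adjointable) := by
    apply Set.Subset.antisymm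
    · intro w hw v _
      exact key w hw v
    · intro w hw v hv
      exact hw v (Set.mem_univ v)
  refine ⟨?_, h2⟩
  apply Set.eq_univ_of_forall
  intro w v hv
  have hv' : v ∈ M.commutant (Set.univ : Set M.Adjointable) := h2 ▸ hv
  exact (hv' w (Set.mem_univ w)).symm
end
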